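/- arXiv:1012.0925 — 4 statements merged into one kernel-verified Lean document; each statement's English description precedes it below -/
import Mathlib

section
/- Let n ≥ 2 and let d : Fin n → ℕ be a function with d(i) ≥ 1 for every i and ∑_{i} d(i) = 2n − 2. Then there exists a simple graph G on the vertex set Fin n which is a tree (connected and acyclic) such that the degree of vertex i in G equals d(i) for every i. -/
open scoped Classical

open Finset

namespace TreelikeAux

variable {n : ℕ} (p : Fin (n + 2) → Fin (n + 2))

/-- Adjacency of the parent graph. -/
def padj (a b : Fin (n + 2)) : Prop :=
  (a ≠ 0 ∧ p a = b) ∨ (b ≠ 0 ∧ p b = a)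

/-- The parent graph of a parent function. -/
def pgraph (hp : ∀ k : Fin (n + 2), k ≠ 0 → p k < k) : SimpleGraph (Fin (n + 2)) where
  Adj := padj p
  symm := by
    refine ⟨fun a b h => ?_⟩
    unfold padj at *
    tauto
  loopless := by
    refine ⟨fun a h => ?_⟩
    rcases h with ⟨h0, h⟩ | ⟨h0, h⟩ <;> exact absurd h (ne_of_lt (hp a h0))

lemma pgraph_adj (hp : ∀ k : Fin (n + 2), k ≠ 0 → p k < k) {a b : Fin (n + 2)} :
    (pgraph p hp).Adj a b ↔ (a ≠ 0 ∧ p a = b) ∨ (b ≠ 0 ∧ p b = a) := Iff.rfl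

lemma pgraph_connected (hp : ∀ k : Fin (n + 2), k ≠ 0 → p k < k) :
    (pgraph p hp).Connected := by
  have key : ∀ m : ℕ, ∀ v : Fin (n + 2), v.val = m → (pgraph p hp).Reachable 0 v := by
    intro m
    induction m using Nat.strong_induction_on with
    | _ m ih =>
      intro v hv
      by_cases h0 : v = 0
      · subst h0; exact SimpleGraph.Reachable.refl 0
      · have hpv := hp v h0
        have hr := ih (p v).val (by omega) (p v) rfl
        refine hr.trans (SimpleGraph.Adj.reachable ?_)
        exact Or.inr ⟨h0, rfl⟩
  rw [SimpleGraph.connected_iff]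
  exact ⟨fun u v => (key u.val u rfl).symm.trans (key v.val v rfl), ⟨0⟩⟩

/-- `desc a v` : `v` is a descendant of `a` (reaching `a` by iterating the parent
function without passing through the root before arriving). -/
def desc (a v : Fin (n + 2)) : Prop :=
  ∃ m : ℕ, p^[m] v = a ∧ ∀ i < m, p^[i] v ≠ 0

lemma desc_self (a : Fin (n + 2)) : desc p a a := ⟨0, rfl, by omega⟩

lemma desc_le (hp : ∀ k : Fin (n + 2), k ≠ 0 → p k < k) {a v : Fin (n + 2)}
    (h : desc p a v) : a ≤ v := by
  obtain ⟨m, hm, hg⟩ := h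
  induction m generalizing v with
  | zero => exact le_of_eq hm.symm
  | succ m ih =>
    have hv0 : v ≠ 0 := hg 0 (by omega)
    have hlt : p v < v := hp v hv0
    have h1 : p^[m] (p v) = a := by rwa [← Function.iterate_succ_apply]
    have h2 : ∀ i < m, p^[i] (p v) ≠ 0 := by
      intro i hi
      have := hg (i + 1) (by omega)
      rwa [Function.iterate_succ_apply] at this
    exact le_trans (ih h1 h2) (le_of_lt hlt)

lemma desc_not_parent (hp : ∀ k : Fin (n + 2), k ≠ 0 → p k < k) {a : Fin (n + 2)}
    (ha : a ≠ 0) : ¬ desc p a (p a) := by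
  intro h
  exact absurd (desc_le p hp h) (not_le.mpr (hp a ha))

lemma desc_step {a u : Fin (n + 2)} (hu0 : u ≠ 0) (hua : u ≠ a) :
    desc p a u ↔ desc p a (p u) := by
  constructor
  · rintro ⟨m, hm, hg⟩
    rcases m with _ | m
    · exact absurd hm hua
    · refine ⟨m, ?_, ?_⟩
      · rwa [← Function.iterate_succ_apply]
      · intro i hi
        have := hg (i + 1) (by omega)
        rwa [Function.iterate_succ_apply] at this
  · rintro ⟨m, hm, hg⟩
    refine ⟨m + 1, by rwa [Function.iterate_succ_apply], ?_⟩
    intro i hi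
    rcases i with _ | i
    · exact hu0
    · rw [Function.iterate_succ_apply]
      exact hg i (by omega)

lemma pgraph_acyclic (hp : ∀ k : Fin (n + 2), k ≠ 0 → p k < k) :
    (pgraph p hp).IsAcyclic := by
  rw [SimpleGraph.isAcyclic_iff_forall_adj_isBridge]
  have bridge : ∀ a : Fin (n + 2), a ≠ 0 → (pgraph p hp).IsBridge s(a, p a) := by
    intro a ha
    rw [SimpleGraph.isBridge_iff]
    intro hreach
    have inv : ∀ u v : Fin (n + 2),
        ((pgraph p hp) \ SimpleGraph.fromEdgeSet {s(a, p a)}).Reachable u v →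
        (desc p a u ↔ desc p a v) := by
      intro u v huv
      obtain ⟨w⟩ := huv
      induction w with
      | nil => rfl
      | @cons x y z h q ih =>
        refine Iff.trans ?_ ih
        have hadj : (pgraph p hp).Adj x y := h.1
        have hne : s(x, y) ≠ s(a, p a) := by
          intro he
          exact h.2 ((SimpleGraph.fromEdgeSet_adj _).mpr ⟨Set.mem_singleton_iff.mpr he, hadj.ne⟩)
        rcases hadj with ⟨hx0, hxy⟩ | ⟨hy0, hyx⟩
        · have hxa : x ≠ a := by
            rintro rfl
            exact hne (by rw [hxy])
          rw [desc_step p hx0 hxa, hxy]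
        · have hya : y ≠ a := by
            rintro rfl
            exact hne (by rw [hyx, Sym2.eq_swap])
          rw [desc_step p hy0 hya, hyx]
    have := (inv a (p a) hreach).mp (desc_self p a)
    exact desc_not_parent p hp ha this
  intro v w hvw
  rcases hvw with ⟨hv0, hpv⟩ | ⟨hw0, hpw⟩
  · rw [← hpv]; exact bridge v hv0
  · rw [← hpw, Sym2.eq_swap]; exact bridge w hw0

lemma pgraph_degree (hp : ∀ k : Fin (n + 2), k ≠ 0 → p k < k) (v : Fin (n + 2)) :
    (pgraph p hp).degree v =
      (univ.filter fun k : Fin (n + 2) => k ≠ 0 ∧ p k = v).card +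
        (if v = 0 then 0 else 1) := by
  rw [← SimpleGraph.card_neighborFinset_eq_degree]
  have hset : (pgraph p hp).neighborFinset v =
      (univ.filter fun k : Fin (n + 2) => k ≠ 0 ∧ p k = v) ∪
        (if v = 0 then (∅ : Finset (Fin (n + 2))) else {p v}) := by
    ext b
    rw [SimpleGraph.mem_neighborFinset, pgraph_adj]
    by_cases h0 : v = 0
    · subst h0
      simp only [if_true, union_empty, mem_filter, mem_univ, true_and]
      constructor
      · rintro (⟨h, _⟩ | h)
        · exact absurd rfl h
        · exact h
      · exact fun h => Or.inr h
    · simp only [h0, if_false, mem_union, mem_filter, mem_univ, true_and, mem_singleton]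
      constructor
      · rintro (⟨_, h⟩ | h)
        · exact Or.inr h.symm
        · exact Or.inl h
      · rintro (h | h)
        · exact Or.inr h
        · exact Or.inl ⟨h0, h.symm⟩
  rw [hset, card_union_of_disjoint]
  · congr 1
    split_ifs <;> simp
  · rw [Finset.disjoint_left]
    intro b hb hb'
    simp only [mem_filter] at hb
    by_cases h0 : v = 0
    · simp [h0] at hb'
    · simp only [h0, if_false, mem_singleton] at hb'
      have h1 : p b < b := hp b hb.2.1
      have h2 : p v < v := hp v h0
      rw [hb.2.2] at h1
      rw [← hb'] at h2
      exact absurd h2 (lt_asymm h1)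

end TreelikeAux
namespace TreelikeAux

variable {m : ℕ}

/-- Child counts: the root `0` gets `f 0` children, vertex `j ≠ 0` gets `f j - 1`. -/
def CC (f : Fin (m + 2) → ℕ) : ℕ → ℕ := fun j =>
  if h : j < m + 2 then (if j = 0 then f ⟨j, h⟩ else f ⟨j, h⟩ - 1) else 0

/-- Prefix sums of child counts. -/
def SS (f : Fin (m + 2) → ℕ) : ℕ → ℕ := fun t => ∑ i ∈ Finset.range t, CC f i

/-- Parent of `k` (as a natural number): the largest `t` with `SS t ≤ k - 1`. -/
def pN (f : Fin (m + 2) → ℕ) : ℕ → ℕ := fun k =>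
  Nat.findGreatest (fun t => SS f t ≤ k - 1) (m + 1)

/-- Parent function on `Fin (m+2)`. -/
def pf (f : Fin (m + 2) → ℕ) : Fin (m + 2) → Fin (m + 2) := fun k =>
  ⟨pN f k.val, lt_of_le_of_lt (Nat.findGreatest_le _) (by omega)⟩

lemma SS_mono (f : Fin (m + 2) → ℕ) : Monotone (SS f) := fun a b hab =>
  Finset.sum_le_sum_of_subset (Finset.range_subset_range.mpr hab)

lemma SS_zero (f : Fin (m + 2) → ℕ) : SS f 0 = 0 := by simp [SS]

lemma SS_succ (f : Fin (m + 2) → ℕ) (t : ℕ) : SS f (t + 1) = SS f t + CC f t :=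
  Finset.sum_range_succ _ _

lemma SS_top (f : Fin (m + 2) → ℕ) (hf1 : ∀ j, 1 ≤ f j)
    (hfsum : ∑ j, f j = 2 * (m + 2) - 2) : SS f (m + 2) = m + 1 := by
  have h1 : ∀ j : Fin (m + 2), CC f j.val + (if j = (0 : Fin (m + 2)) then 0 else 1) = f j := by
    intro j
    unfold CC
    rw [dif_pos j.isLt]
    by_cases hj : j = 0
    · have : j.val = 0 := by simp [hj]
      simp [this, hj, Fin.eta]
    · have hval : j.val ≠ 0 := fun h => hj (Fin.ext (by simp [h]))
      rw [if_neg hval, if_neg hj, Fin.eta]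
      have := hf1 j
      omega
  have h2 : ∑ j : Fin (m + 2), (if j = (0 : Fin (m + 2)) then 0 else 1) = m + 1 := by
    rw [Fin.sum_univ_succ]
    simp [Fin.succ_ne_zero]
  have h3 : ∑ j : Fin (m + 2), CC f j.val +
      ∑ j : Fin (m + 2), (if j = (0 : Fin (m + 2)) then 0 else 1) = ∑ j, f j := by
    rw [← Finset.sum_add_distrib]
    exact Finset.sum_congr rfl fun j _ => h1 j
  have h4 : SS f (m + 2) = ∑ j : Fin (m + 2), CC f j.val := by
    rw [SS, ← Fin.sum_univ_eq_sum_range]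
  rw [h4]
  omega

lemma pN_spec (f : Fin (m + 2) → ℕ) (hf1 : ∀ j, 1 ≤ f j)
    (hfsum : ∑ j, f j = 2 * (m + 2) - 2) {k : ℕ} (hk1 : 1 ≤ k) (hk2 : k ≤ m + 1) :
    SS f (pN f k) ≤ k - 1 ∧ k - 1 < SS f (pN f k + 1) := by
  constructor
  · exact Nat.findGreatest_spec (P := fun t => SS f t ≤ k - 1) (Nat.zero_le _)
      (by show SS f 0 ≤ k - 1; rw [SS_zero]; omega)
  · have hle : pN f k ≤ m + 1 := Nat.findGreatest_le _
    by_cases hvm : pN f k + 1 ≤ m + 1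
    · have := Nat.findGreatest_is_greatest (P := fun t => SS f t ≤ k - 1)
        (show pN f k < pN f k + 1 by omega) hvm
      omega
    · have hEq : pN f k + 1 = m + 2 := by omega
      rw [hEq, SS_top f hf1 hfsum]
      omega

lemma pN_uniq (f : Fin (m + 2) → ℕ) (hf1 : ∀ j, 1 ≤ f j)
    (hfsum : ∑ j, f j = 2 * (m + 2) - 2) {k v : ℕ} (hk1 : 1 ≤ k) (hk2 : k ≤ m + 1)
    (hv : v ≤ m + 1) (h1 : SS f v ≤ k - 1) (h2 : k - 1 < SS f (v + 1)) :
    pN f k = v := by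
  have le1 : v ≤ pN f k := Nat.le_findGreatest hv h1
  have le2 : pN f k ≤ v := by
    by_contra hcon
    have : v + 1 ≤ pN f k := by omega
    have := SS_mono f this
    have := (pN_spec f hf1 hfsum hk1 hk2).1
    omega
  omega

lemma pf_lt (f : Fin (m + 2) → ℕ) (hanti : Antitone f) (hf1 : ∀ j, 1 ≤ f j)
    (hfsum : ∑ j, f j = 2 * (m + 2) - 2) :
    ∀ k : Fin (m + 2), k ≠ 0 → pf f k < k := by
  intro k hk0
  have hkval : k.val ≠ 0 := fun h => hk0 (Fin.ext (by simp [h]))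
  have hk1 : 1 ≤ k.val := by omega
  have hk2 : k.val ≤ m + 1 := by have := k.isLt; omega
  obtain ⟨hA, hB⟩ := pN_spec f hf1 hfsum hk1 hk2
  set v := pN f k.val with hv
  have hvle : v ≤ m + 1 := Nat.findGreatest_le _
  rw [SS_succ] at hB
  have hCpos : 1 ≤ CC f v := by omega
  rw [Fin.lt_def]
  show v < k.val
  by_cases hv0 : v = 0
  · omega
  · have hvlt : v < m + 2 := by omega
    have hfv2 : 2 ≤ f ⟨v, hvlt⟩ := by
      unfold CC at hCpos
      rw [dif_pos hvlt, if_neg hv0] at hCpos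
      omega
    have claim : ∀ w (hw : w < m + 2), 1 ≤ w → 2 ≤ f ⟨w, hw⟩ → w + 1 ≤ SS f w := by
      intro w
      induction w with
      | zero => omega
      | succ w ih =>
        intro hw _ hfw
        rw [SS_succ]
        by_cases hw0 : w = 0
        · subst hw0
          have hc : CC f 0 = f ⟨0, by omega⟩ := by
            unfold CC
            rw [dif_pos (show (0:ℕ) < m + 2 by omega), if_pos rfl]
          have h0 : 2 ≤ CC f 0 := by
            rw [hc]
            exact le_trans hfw (hanti (show (⟨0, by omega⟩ : Fin (m + 2)) ≤ ⟨0 + 1, hw⟩ by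
              rw [Fin.mk_le_mk]; omega))
          rw [SS_zero]
          omega
        · have hwlt : w < m + 2 := by omega
          have hc : CC f w = f ⟨w, hwlt⟩ - 1 := by
            unfold CC; rw [dif_pos hwlt, if_neg hw0]
          have h1 : 1 ≤ CC f w := by
            rw [hc]
            have hfw' : 2 ≤ f ⟨w, hwlt⟩ :=
              le_trans hfw (hanti (show (⟨w, hwlt⟩ : Fin (m + 2)) ≤ ⟨w + 1, hw⟩ by
                rw [Fin.mk_le_mk]; omega))
            omega
          have h2 := ih hwlt (by omega)
          have hfw' : 2 ≤ f ⟨w, hwlt⟩ :=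
            le_trans hfw (hanti (show (⟨w, hwlt⟩ : Fin (m + 2)) ≤ ⟨w + 1, hw⟩ by
              rw [Fin.mk_le_mk]; omega))
          have h3 := h2 hfw'
          omega
    have := claim v hvlt (by omega) hfv2
    omega

open Finset in
lemma child_card (f : Fin (m + 2) → ℕ) (hanti : Antitone f) (hf1 : ∀ j, 1 ≤ f j)
    (hfsum : ∑ j, f j = 2 * (m + 2) - 2) (v : Fin (m + 2)) :
    (univ.filter fun k : Fin (m + 2) => k ≠ 0 ∧ pf f k = v).card = CC f v.val := by
  have hub : SS f (v.val + 1) ≤ m + 1 := by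
    rw [← SS_top f hf1 hfsum]
    exact SS_mono f (by have := v.isLt; omega)
  have hbound : ∀ t ∈ Ioc (SS f v.val) (SS f (v.val + 1)), t < m + 2 := by
    intro t ht
    rw [mem_Ioc] at ht
    omega
  have hfilter : (univ.filter fun k : Fin (m + 2) => k ≠ 0 ∧ pf f k = v) =
      (Ioc (SS f v.val) (SS f (v.val + 1))).attachFin hbound := by
    ext k
    rw [mem_filter, Finset.mem_attachFin, mem_Ioc]
    constructor
    · rintro ⟨-, hk0, hpk⟩
      have hkval : k.val ≠ 0 := fun h => hk0 (Fin.ext (by simp [h]))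
      have hk2 : k.val ≤ m + 1 := by have := k.isLt; omega
      obtain ⟨hA, hB⟩ := pN_spec f hf1 hfsum (by omega) hk2
      have hpv : pN f k.val = v.val := congrArg Fin.val hpk
      rw [hpv] at hA hB
      omega
    · rintro ⟨h1, h2⟩
      have hk1 : 1 ≤ k.val := by omega
      have hk2 : k.val ≤ m + 1 := by omega
      have hpk : pN f k.val = v.val :=
        pN_uniq f hf1 hfsum hk1 hk2 (by have := v.isLt; omega) (by omega) (by omega)
      refine ⟨mem_univ k, fun h => ?_, Fin.ext hpk⟩
      · have : k.val = 0 := congrArg Fin.val h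
        omega
  rw [hfilter, Finset.card_attachFin, Nat.card_Ioc]
  have := SS_succ f v.val
  omega

open Finset in
lemma sorted_case (f : Fin (m + 2) → ℕ) (hanti : Antitone f) (hf1 : ∀ j, 1 ≤ f j)
    (hfsum : ∑ j, f j = 2 * (m + 2) - 2) :
    ∃ G : SimpleGraph (Fin (m + 2)), G.Connected ∧ G.IsAcyclic ∧
      ∀ i : Fin (m + 2), G.degree i = f i := by
  have hp := pf_lt f hanti hf1 hfsum
  refine ⟨pgraph (pf f) hp, pgraph_connected _ hp, pgraph_acyclic _ hp, ?_⟩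
  intro v
  rw [pgraph_degree (pf f) hp v, child_card f hanti hf1 hfsum v]
  by_cases hv : v = 0
  · subst hv
    simp only [if_true]
    unfold CC
    rw [dif_pos (by omega : (0:Fin (m+2)).val < m + 2)]
    simp
  · have hval : v.val ≠ 0 := fun h => hv (Fin.ext (by simp [h]))
    rw [if_neg hv]
    unfold CC
    rw [dif_pos v.isLt, if_neg hval, Fin.eta]
    have := hf1 v
    omega

lemma degree_comap {k : ℕ} (e : Fin k ≃ Fin k) (G : SimpleGraph (Fin k)) (v : Fin k) :
    (G.comap ⇑e).degree v = G.degree (e v) := by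
  rw [← SimpleGraph.card_neighborSet_eq_degree, ← SimpleGraph.card_neighborSet_eq_degree]
  exact Fintype.card_congr (Equiv.subtypeEquiv e (fun w => Iff.rfl))

end TreelikeAux

open scoped Classical in
/-- Every tree-like sequence `d : Fin n → ℕ` (all entries positive, total sum
`2 * n - 2`, with `n ≥ 2`) is the degree sequence of some tree (connected
acyclic simple graph) on the vertex set `Fin n`. -/
theorem treelike_sequence_realizable_by_tree (n : ℕ) (hn : 2 ≤ n)
    (d : Fin n → ℕ) (hpos : ∀ i, 1 ≤ d i) (hsum : ∑ i, d i = 2 * n - 2) :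
    ∃ G : SimpleGraph (Fin n), G.Connected ∧ G.IsAcyclic ∧
      ∀ i : Fin n, G.degree i = d i := by
  obtain ⟨m, rfl⟩ : ∃ m, n = m + 2 := ⟨n - 2, by omega⟩
  set τ : Equiv.Perm (Fin (m + 2)) := (Fin.revPerm).trans (Tuple.sort d) with hτ
  set f : Fin (m + 2) → ℕ := fun j => d (τ j) with hf
  have hanti : Antitone f := by
    intro i j hij
    have hmono := Tuple.monotone_sort d
    have : Fin.rev j ≤ Fin.rev i := Fin.rev_le_rev.mpr hij
    exact hmono this
  have hf1 : ∀ j, 1 ≤ f j := fun j => hpos _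
  have hfsum : ∑ j, f j = 2 * (m + 2) - 2 := by
    rw [hf, ← hsum]
    exact Equiv.sum_comp τ d
  obtain ⟨G₀, hc, ha, hd⟩ := TreelikeAux.sorted_case f hanti hf1 hfsum
  have φ : G₀.comap ⇑(τ.symm) ≃g G₀ := { (τ.symm : Fin (m+2) ≃ Fin (m+2)) with map_rel_iff' := Iff.rfl }
  refine ⟨G₀.comap ⇑(τ.symm), ?_, ?_, ?_⟩
  · exact φ.connected_iff.mpr hc
  · intro v c hcyc
    have hinj : Function.Injective ⇑φ.toHom := φ.injective
    exact ha (c.map φ.toHom) ((SimpleGraph.Walk.map_isCycle_iff_of_injective hinj).mpr hcyc)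
  · intro i
    erw [TreelikeAux.degree_comap τ.symm G₀ i, hd]
    show d (τ (τ.symm i)) = d i
    rw [Equiv.apply_symm_apply]
end

section
/- Let x_1 ≥ x_2 ≥ ⋯ ≥ x_n be a nonincreasing tree-like sequence of positive integers, and let p, q be positive integers such that p ≥ q > 1 and p + q = n + 1. Then there exist tree-like sequences of positive integers a_1, a_2, …, a_p and b_1, b_2, …, b_q such that a_1 + b_1 = x_1 and the multiset {a_2, a_3, …, a_p, b_2, b_3, …, b_q} equals the multiset {x_2, x_3, …, x_n}. -/
private lemma icc_val_split (a b d c : ℕ) (hd : d = b + 1) (h1 : a ≤ d) (h2 : b ≤ c) :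
    (Finset.Icc a b).val + (Finset.Icc d c).val = (Finset.Icc a c).val := by
  subst hd
  have hdisj : Disjoint (Finset.Icc a b) (Finset.Icc (b+1) c) := by
    rw [Finset.disjoint_left]
    intro i hi hi'
    simp only [Finset.mem_Icc] at hi hi'
    omega
  have h : (Finset.Icc a b).disjUnion (Finset.Icc (b+1) c) hdisj = Finset.Icc a c := by
    ext i
    simp only [Finset.mem_disjUnion, Finset.mem_Icc]
    omega
  calc (Finset.Icc a b).val + (Finset.Icc (b+1) c).val
      = ((Finset.Icc a b).disjUnion (Finset.Icc (b+1) c) hdisj).val := rfl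
    _ = (Finset.Icc a c).val := by rw [h]

private lemma sum_icc_split (f : ℕ → ℕ) (a b d c : ℕ) (hd : d = b + 1)
    (h1 : a ≤ d) (h2 : b ≤ c) :
    (∑ i ∈ Finset.Icc a b, f i) + (∑ i ∈ Finset.Icc d c, f i)
      = ∑ i ∈ Finset.Icc a c, f i := by
  rw [Finset.sum_eq_multiset_sum, Finset.sum_eq_multiset_sum, Finset.sum_eq_multiset_sum, ← icc_val_split a b d c hd h1 h2,
    Multiset.map_add, Multiset.sum_add]

private lemma icc_val_map_add (a b c a' b' : ℕ) (ha : a' = a + c) (hb : b' = b + c) :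
    (Finset.Icc a b).val.map (fun i => i + c) = (Finset.Icc a' b').val := by
  subst ha; subst hb
  have h : Finset.map ⟨fun i => i + c, add_left_injective c⟩ (Finset.Icc a b)
      = Finset.Icc (a+c) (b+c) := by
    ext i
    simp only [Finset.mem_map, Finset.mem_Icc, Function.Embedding.coeFn_mk]
    constructor
    · rintro ⟨u, hu, rfl⟩; omega
    · intro h; exact ⟨i - c, by omega, by omega⟩
  have h2 := congrArg Finset.val h
  simpa [Finset.map_val] using h2

private lemma sum_icc_shift (f : ℕ → ℕ) (a b c a' b' : ℕ) (ha : a' = a + c) (hb : b' = b + c) :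
    (∑ i ∈ Finset.Icc a b, f (i + c)) = ∑ i ∈ Finset.Icc a' b', f i := by
  rw [Finset.sum_eq_multiset_sum, Finset.sum_eq_multiset_sum, ← icc_val_map_add a b c a' b' ha hb, Multiset.map_map]
  rfl

/-- Lemma 2. Let `x 1 ≥ x 2 ≥ ⋯ ≥ x n` be a nonincreasing tree-like sequence of
positive integers and let `p ≥ q > 1` with `p + q = n + 1`.  Then there exist
tree-like sequences of positive integers `a 1, …, a p` and `b 1, …, b q` such
that `a 1 + b 1 = x 1` and the multiset `{a 2, …, a p, b 2, …, b q}` equals the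
multiset `{x 2, …, x n}`. (All sequences are `1`-indexed.) -/
theorem lemma2_split_treelike (n p q : ℕ) (x : ℕ → ℕ)
    (hpos : ∀ i ∈ Finset.Icc 1 n, 1 ≤ x i)
    (hmono : ∀ i j : ℕ, 1 ≤ i → i ≤ j → j ≤ n → x j ≤ x i)
    (hsum : ∑ i ∈ Finset.Icc 1 n, x i = 2 * n - 2)
    (hq : 1 < q) (hpq : q ≤ p) (hn : p + q = n + 1) :
    ∃ a b : ℕ → ℕ,
      (∀ i ∈ Finset.Icc 1 p, 1 ≤ a i) ∧
      (∑ i ∈ Finset.Icc 1 p, a i = 2 * p - 2) ∧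
      (∀ i ∈ Finset.Icc 1 q, 1 ≤ b i) ∧
      (∑ i ∈ Finset.Icc 1 q, b i = 2 * q - 2) ∧
      a 1 + b 1 = x 1 ∧
      (Finset.Icc 2 p).val.map a + (Finset.Icc 2 q).val.map b
        = (Finset.Icc 2 n).val.map x := by
  have hp2 : 2 ≤ p := le_trans hq hpq
  have hn3 : 3 ≤ n := by omega
  -- x 1 ≥ 2
  have hx1 : 2 ≤ x 1 := by
    by_contra h
    push_neg at h
    have hall : ∀ i ∈ Finset.Icc 1 n, x i = 1 := by
      intro i hi
      simp only [Finset.mem_Icc] at hi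
      have h1 := hpos i (by simp only [Finset.mem_Icc]; omega)
      have h2 := hmono 1 i le_rfl hi.1 hi.2
      omega
    rw [Finset.sum_congr rfl hall, Finset.sum_const, Nat.card_Icc, smul_eq_mul] at hsum
    omega
  -- pigeonhole: the tail sum starting after position m is < 2*(n-m)
  have pigeon : ∀ m : ℕ, 1 ≤ m → m + 1 ≤ n →
      (∑ i ∈ Finset.Icc (m+1) n, x i) + 1 ≤ 2 * (n - m) := by
    intro m hm1 hmn
    by_contra hcon
    push_neg at hcon
    have hub : ∑ i ∈ Finset.Icc (m+1) n, x i ≤ ∑ i ∈ Finset.Icc (m+1) n, x (m+1) := by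
      apply Finset.sum_le_sum
      intro i hi
      simp only [Finset.mem_Icc] at hi
      exact hmono (m+1) i (by omega) hi.1 hi.2
    rw [Finset.sum_const, Nat.card_Icc, smul_eq_mul] at hub
    have hxm : 2 ≤ x (m+1) := by
      by_contra hx
      push_neg at hx
      have h1 : (n + 1 - (m+1)) * x (m+1) ≤ (n + 1 - (m+1)) * 1 :=
        Nat.mul_le_mul_left _ (by omega)
      omega
    have hlow : ∀ i ∈ Finset.Icc 1 m, 2 ≤ x i := by
      intro i hi
      simp only [Finset.mem_Icc] at hi
      exact le_trans hxm (hmono i (m+1) hi.1 (by omega) (by omega))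
    have hsum1 : ∑ i ∈ Finset.Icc 1 m, 2 ≤ ∑ i ∈ Finset.Icc 1 m, x i :=
      Finset.sum_le_sum hlow
    rw [Finset.sum_const, Nat.card_Icc, smul_eq_mul] at hsum1
    have hsplit := sum_icc_split x 1 m (m+1) n rfl (by omega) (by omega)
    omega
  have F1 := pigeon p (by omega) (by omega)
  have F2' := pigeon q (by omega) (by omega)
  have hT0 := sum_icc_split x 2 q (q+1) n rfl (by omega) (by omega)
  have hx2n : x 1 + ∑ i ∈ Finset.Icc 2 n, x i = 2 * n - 2 := by
    have h := sum_icc_split x 1 1 2 n rfl (by omega) (by omega)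
    rw [Finset.Icc_self, Finset.sum_singleton] at h
    omega
  have F2 : 2 * q ≤ (∑ i ∈ Finset.Icc 2 q, x i) + x 1 + 1 := by omega
  -- existence of a good window
  have hP : (∑ i ∈ Finset.Icc (p-1+2) (p-1+q), x i) + 3 ≤ 2 * q := by
    have e1 : p - 1 + 2 = p + 1 := by omega
    have e2 : p - 1 + q = n := by omega
    rw [e1, e2]
    omega
  have hex : ∃ j, (∑ i ∈ Finset.Icc (j+2) (j+q), x i) + 3 ≤ 2 * q := ⟨_, hP⟩
  obtain ⟨k, hk1, hkmin⟩ : ∃ k, ((∑ i ∈ Finset.Icc (k+2) (k+q), x i) + 3 ≤ 2 * q) ∧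
      ∀ j < k, ¬((∑ i ∈ Finset.Icc (j+2) (j+q), x i) + 3 ≤ 2 * q) :=
    ⟨Nat.find hex, Nat.find_spec hex, fun j hj => Nat.find_min hex hj⟩
  have hk2 : k ≤ p - 1 := by
    by_contra hc
    push_neg at hc
    exact hkmin _ hc hP
  have hk3 : 2 * q ≤ (∑ i ∈ Finset.Icc (k+2) (k+q), x i) + x 1 + 1 := by
    cases k with
    | zero => simpa using F2
    | succ j =>
      have hnP := hkmin j (by omega)
      push_neg at hnP
      have h1 := sum_icc_split x (j+2) (j+q) (j+q+1) (j+q+1) rfl (by omega) (by omega)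
      have h2 := sum_icc_split x (j+2) (j+2) (j+3) (j+q+1) rfl (by omega) (by omega)
      rw [Finset.Icc_self, Finset.sum_singleton] at h1 h2
      have e1 : j + 1 + 2 = j + 3 := by omega
      have e2 : j + 1 + q = j + q + 1 := by omega
      rw [e1, e2]
      have hxq : 1 ≤ x (j+q+1) := hpos _ (by simp only [Finset.mem_Icc]; omega)
      have hxj : x (j+2) ≤ x 1 := hmono 1 (j+2) le_rfl (by omega) (by omega)
      omega
  set Tk := ∑ i ∈ Finset.Icc (k+2) (k+q), x i with hTk
  -- the construction
  obtain ⟨a, ha⟩ : ∃ a : ℕ → ℕ, a = fun i =>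
      if i = 1 then x 1 - (2 * q - 2 - Tk) else if i ≤ k+1 then x i else x (i + (q-1)) :=
    ⟨_, rfl⟩
  obtain ⟨b, hb⟩ : ∃ b : ℕ → ℕ, b = fun i =>
      if i = 1 then 2 * q - 2 - Tk else x (i + k) := ⟨_, rfl⟩
  have ha1 : a 1 = x 1 - (2 * q - 2 - Tk) := by simp [ha]
  have ha2 : ∀ i, 2 ≤ i → i ≤ k + 1 → a i = x i := by
    intro i h1 h2
    simp only [ha]
    rw [if_neg (by omega), if_pos h2]
  have ha3 : ∀ i, k + 2 ≤ i → a i = x (i + (q-1)) := by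
    intro i h1
    simp only [ha]
    rw [if_neg (by omega), if_neg (by omega)]
  have hb1 : b 1 = 2 * q - 2 - Tk := by simp [hb]
  have hb2 : ∀ i, 2 ≤ i → b i = x (i + k) := by
    intro i h1
    simp only [hb]
    rw [if_neg (by omega)]
  refine ⟨a, b, ?_, ?_, ?_, ?_, ?_, ?_⟩
  · -- positivity of a
    intro i hi
    simp only [Finset.mem_Icc] at hi
    by_cases h1 : i = 1
    · subst h1
      rw [ha1]
      omega
    · by_cases h2 : i ≤ k + 1
      · rw [ha2 i (by omega) h2]
        exact hpos i (by simp only [Finset.mem_Icc]; omega)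
      · rw [ha3 i (by omega)]
        exact hpos _ (by simp only [Finset.mem_Icc]; omega)
  · -- sum of a
    have hs1 := sum_icc_split a 1 1 2 p rfl (by omega) (by omega)
    rw [Finset.Icc_self, Finset.sum_singleton] at hs1
    have hs2 := sum_icc_split a 2 (k+1) (k+2) p rfl (by omega) (by omega)
    have hs3 : ∑ i ∈ Finset.Icc 2 (k+1), a i = ∑ i ∈ Finset.Icc 2 (k+1), x i :=
      Finset.sum_congr rfl fun i hi => by
        simp only [Finset.mem_Icc] at hi; exact ha2 i hi.1 hi.2
    have hs4 : ∑ i ∈ Finset.Icc (k+2) p, a i = ∑ i ∈ Finset.Icc (k+q+1) n, x i := by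
      have h1 : ∑ i ∈ Finset.Icc (k+2) p, a i
          = ∑ i ∈ Finset.Icc (k+2) p, x (i + (q-1)) :=
        Finset.sum_congr rfl fun i hi => by
          simp only [Finset.mem_Icc] at hi; exact ha3 i hi.1
      rw [h1, sum_icc_shift x (k+2) p (q-1) (k+q+1) n (by omega) (by omega)]
    have ht1 := sum_icc_split x 2 (k+1) (k+2) (k+q) rfl (by omega) (by omega)
    have ht2 := sum_icc_split x 2 (k+q) (k+q+1) n rfl (by omega) (by omega)
    rw [← hs1, ha1]
    omega
  · -- positivity of b
    intro i hi
    simp only [Finset.mem_Icc] at hi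
    by_cases h1 : i = 1
    · subst h1
      rw [hb1]
      omega
    · rw [hb2 i (by omega)]
      exact hpos _ (by simp only [Finset.mem_Icc]; omega)
  · -- sum of b
    have hs1 := sum_icc_split b 1 1 2 q rfl (by omega) (by omega)
    rw [Finset.Icc_self, Finset.sum_singleton] at hs1
    have hs2 : ∑ i ∈ Finset.Icc 2 q, b i = Tk := by
      have h1 : ∑ i ∈ Finset.Icc 2 q, b i = ∑ i ∈ Finset.Icc 2 q, x (i + k) :=
        Finset.sum_congr rfl fun i hi => by
          simp only [Finset.mem_Icc] at hi; exact hb2 i hi.1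
      rw [h1, sum_icc_shift x 2 q k (k+2) (k+q) (by omega) (by omega)]
    rw [← hs1, hb1]
    omega
  · -- a 1 + b 1 = x 1
    rw [ha1, hb1]
    omega
  · -- multiset equality
    have m1 : (Finset.Icc 2 (k+1)).val.map a = (Finset.Icc 2 (k+1)).val.map x :=
      Multiset.map_congr rfl fun i hi => by
        rw [Finset.mem_val, Finset.mem_Icc] at hi
        exact ha2 i hi.1 hi.2
    have m2 : (Finset.Icc (k+2) p).val.map a = (Finset.Icc (k+q+1) n).val.map x := by
      calc (Finset.Icc (k+2) p).val.map a
          = (Finset.Icc (k+2) p).val.map (fun i => x (i + (q-1))) :=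
            Multiset.map_congr rfl fun i hi => by
              rw [Finset.mem_val, Finset.mem_Icc] at hi
              exact ha3 i hi.1
        _ = ((Finset.Icc (k+2) p).val.map (fun i => i + (q-1))).map x :=
            (Multiset.map_map x (fun i => i + (q-1)) _).symm
        _ = (Finset.Icc (k+q+1) n).val.map x := by
            rw [icc_val_map_add (k+2) p (q-1) (k+q+1) n (by omega) (by omega)]
    have m3 : (Finset.Icc 2 q).val.map b = (Finset.Icc (k+2) (k+q)).val.map x := by
      calc (Finset.Icc 2 q).val.map b
          = (Finset.Icc 2 q).val.map (fun i => x (i + k)) :=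
            Multiset.map_congr rfl fun i hi => by
              rw [Finset.mem_val, Finset.mem_Icc] at hi
              exact hb2 i hi.1
        _ = ((Finset.Icc 2 q).val.map (fun i => i + k)).map x :=
            (Multiset.map_map x (fun i => i + k) _).symm
        _ = (Finset.Icc (k+2) (k+q)).val.map x := by
            rw [icc_val_map_add 2 q k (k+2) (k+q) (by omega) (by omega)]
    have hv1 : (Finset.Icc 2 (k+1)).val + (Finset.Icc (k+2) p).val = (Finset.Icc 2 p).val :=
      icc_val_split 2 (k+1) (k+2) p rfl (by omega) (by omega)
    have hv2 : (Finset.Icc 2 (k+1)).val + (Finset.Icc (k+2) (k+q)).val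
        = (Finset.Icc 2 (k+q)).val :=
      icc_val_split 2 (k+1) (k+2) (k+q) rfl (by omega) (by omega)
    have hv3 : (Finset.Icc 2 (k+q)).val + (Finset.Icc (k+q+1) n).val = (Finset.Icc 2 n).val :=
      icc_val_split 2 (k+q) (k+q+1) n rfl (by omega) (by omega)
    have key : (Finset.Icc 2 (k+1)).val + (Finset.Icc (k+q+1) n).val
        + (Finset.Icc (k+2) (k+q)).val = (Finset.Icc 2 n).val := by
      rw [add_right_comm, hv2, hv3]
    rw [← hv1, Multiset.map_add, m1, m2, m3, ← Multiset.map_add, ← Multiset.map_add, key]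
end

section
/- Let x_1 ≥ x_2 ≥ ⋯ ≥ x_n be a nonincreasing tree-like sequence of positive integers with n ≥ 3, let r be the number of indices i with x_i > 1, and for 1 ≤ s ≤ r set z_s = x_2 + x_3 + ⋯ + x_s (so z_1 = 0, the empty sum). Then for every integer p with 2 ≤ p ≤ n − 1 there exists s with 1 ≤ s ≤ r such that z_s − s + 3 ≤ p ≤ z_s − s + x_1 + 1. -/
/-- The discrete intermediate-value claim inside the proof of Lemma 2.
Let `x 1 ≥ x 2 ≥ ⋯ ≥ x n` be a nonincreasing tree-like sequence of positive
integers with `n ≥ 3`, let `r` be the number of indices `i` with `x i > 1`,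
and let `z s = x 2 + ⋯ + x s`.  Then for every `p` with `2 ≤ p ≤ n - 1` there
is an `s` with `1 ≤ s ≤ r` and `z s - s + 3 ≤ p ≤ z s - s + x 1 + 1`.
(Entries take values in `ℤ` so that the expressions `z s - s + 3` etc. are the
usual integer ones; sequences are `1`-indexed.) -/
theorem lemma2_intermediate_value (n : ℕ) (hn : 3 ≤ n) (x : ℕ → ℤ)
    (hpos : ∀ i ∈ Finset.Icc 1 n, 1 ≤ x i)
    (hmono : ∀ i j : ℕ, 1 ≤ i → i ≤ j → j ≤ n → x j ≤ x i)
    (hsum : ∑ i ∈ Finset.Icc 1 n, x i = 2 * (n : ℤ) - 2)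
    (r : ℕ) (hr : r = ((Finset.Icc 1 n).filter (fun i => 1 < x i)).card)
    (p : ℕ) (hp2 : 2 ≤ p) (hpn : p ≤ n - 1) :
    ∃ s : ℕ, 1 ≤ s ∧ s ≤ r ∧
      (∑ i ∈ Finset.Icc 2 s, x i) - s + 3 ≤ (p : ℤ) ∧
      (p : ℤ) ≤ (∑ i ∈ Finset.Icc 2 s, x i) - s + x 1 + 1 := by
  classical
  set S := (Finset.Icc 1 n).filter (fun i => 1 < x i) with hS
  -- r ≤ n
  have hrn : r ≤ n := by
    rw [hr]
    calc S.card ≤ (Finset.Icc 1 n).card := Finset.card_filter_le _ _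
    _ = n := by simp
  -- x 1 > 1
  have hx1 : 1 < x 1 := by
    by_contra h
    push_neg at h
    have hall : ∀ i ∈ Finset.Icc 1 n, x i = (1 : ℤ) := by
      intro i hi
      have h1 := hpos i hi
      simp only [Finset.mem_Icc] at hi
      have := hmono 1 i le_rfl hi.1 hi.2
      omega
    rw [Finset.sum_congr rfl hall, Finset.sum_const] at hsum
    simp at hsum
    omega
  -- indices ≤ r have x i > 1; indices > r have x i = 1
  have hB : ∀ i, r < i → i ≤ n → x i = 1 := by
    intro i hri hin
    have h1 : 1 ≤ i := by omega
    by_contra hne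
    have hgt : 1 < x i := by
      have := hpos i (Finset.mem_Icc.mpr ⟨h1, hin⟩); omega
    have hsub : Finset.Icc 1 i ⊆ S := by
      intro j hj
      simp only [Finset.mem_Icc] at hj
      refine Finset.mem_filter.mpr ⟨Finset.mem_Icc.mpr ⟨hj.1, le_trans hj.2 hin⟩, ?_⟩
      exact lt_of_lt_of_le hgt (hmono j i hj.1 hj.2 hin)
    have := Finset.card_le_card hsub
    simp [← hr] at this
    omega
  have hA : ∀ i, 1 ≤ i → i ≤ r → 1 < x i := by
    intro i h1 hir
    by_contra h
    push_neg at h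
    have hsub : S ⊆ Finset.Icc 1 (i - 1) := by
      intro j hj
      obtain ⟨hj1, hj2⟩ := Finset.mem_filter.mp hj
      simp only [Finset.mem_Icc] at hj1 ⊢
      refine ⟨hj1.1, ?_⟩
      by_contra hji
      push_neg at hji
      have : x j ≤ x i := hmono i j h1 (by omega) hj1.2
      omega
    have := Finset.card_le_card hsub
    simp [← hr] at this
    omega
  have hr1 : 1 ≤ r := by
    by_contra h
    have := hB 1 (by omega) (by omega)
    omega
  -- key identity: x 1 + z r + (n - r) = 2n - 2
  have hzr : x 1 + (∑ i ∈ Finset.Icc 2 r, x i) = (n : ℤ) + r - 2 := by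
    have e1 : (∑ i ∈ Finset.Ioc 0 r, x i) + ∑ i ∈ Finset.Ioc r n, x i
        = ∑ i ∈ Finset.Ioc 0 n, x i := Finset.sum_Ioc_consecutive x (by omega) hrn
    have e2 : (∑ i ∈ Finset.Ioc 0 1, x i) + ∑ i ∈ Finset.Ioc 1 r, x i
        = ∑ i ∈ Finset.Ioc 0 r, x i := Finset.sum_Ioc_consecutive x (by omega) hr1
    have e3 : ∑ i ∈ Finset.Ioc r n, x i = ((n : ℤ) - r) := by
      have hone : ∀ i ∈ Finset.Ioc r n, x i = (1 : ℤ) := fun i hi =>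
        hB i (Finset.mem_Ioc.mp hi).1 (Finset.mem_Ioc.mp hi).2
      rw [Finset.sum_congr rfl hone, Finset.sum_const, Nat.card_Ioc, nsmul_eq_mul,
        mul_one, Nat.cast_sub hrn]
    have e4 : ∑ i ∈ Finset.Ioc 0 1, x i = x 1 := by
      have : Finset.Ioc 0 1 = {1} := rfl
      rw [this, Finset.sum_singleton]
    have e5 : Finset.Icc 2 r = Finset.Ioc 1 r := (Finset.Icc_add_one_left_eq_Ioc 1 r)
    have e6 : Finset.Icc 1 n = Finset.Ioc 0 n := (Finset.Icc_add_one_left_eq_Ioc 0 n)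
    rw [e5]
    rw [e6] at hsum
    linarith [e1, e2, e3, e4, hsum]
  -- choose largest s in [1,r] with z s - s + 3 ≤ p
  set P : ℕ → Prop := fun s => 1 ≤ s ∧ (∑ i ∈ Finset.Icc 2 s, x i) - s + 3 ≤ (p : ℤ)
  have hP1 : P 1 := by
    refine ⟨le_rfl, ?_⟩
    have he : Finset.Icc 2 1 = (∅ : Finset ℕ) := by simp
    rw [he, Finset.sum_empty]
    push_cast
    omega
  set s := Nat.findGreatest P r with hsdef
  have hPs : P s := Nat.findGreatest_spec hr1 hP1
  have hsr : s ≤ r := Nat.findGreatest_le r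
  refine ⟨s, hPs.1, hsr, hPs.2, ?_⟩
  rcases eq_or_lt_of_le hsr with heq | hlt
  · -- s = r : use the identity and p ≤ n - 1
    have hpn' : (p : ℤ) ≤ (n : ℤ) - 1 := by
      have : p + 1 ≤ n := by omega
      push_cast
      omega
    rw [heq]
    linarith [hzr]
  · -- s < r : maximality at s+1
    have hnot : ¬ P (s + 1) := Nat.findGreatest_is_greatest (P := P) (n := r) (k := s + 1) (by omega) (by omega)
    have h1s : 1 ≤ s + 1 := by omega
    have hlt' : (p : ℤ) < (∑ i ∈ Finset.Icc 2 (s + 1), x i) - (s + 1) + 3 := by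
      by_contra h
      push_neg at h
      exact hnot ⟨h1s, h⟩
    have hsucc : (∑ i ∈ Finset.Icc 2 (s + 1), x i)
        = (∑ i ∈ Finset.Icc 2 s, x i) + x (s + 1) := by
      apply Finset.sum_Icc_succ_top
      omega
    have hxle : x (s + 1) ≤ x 1 := hmono 1 (s + 1) le_rfl (by omega) (by omega)
    rw [hsucc] at hlt'
    push_cast at hlt' ⊢
    linarith
end

section
/- Let x_1 ≥ x_2 ≥ ⋯ ≥ x_n be a nonincreasing tree-like sequence of positive integers, let r be the number of indices i with x_i > 1, and set z_s = x_2 + ⋯ + x_s for 1 ≤ s ≤ r (with z_1 = 0). Fix integers p, q with p ≥ q > 1 and p + q = n + 1, and suppose s satisfies 1 ≤ s ≤ r and z_s − s + 3 ≤ p ≤ z_s − s + x_1 + 1. Define a_1 = p − (z_s − s + 3) + 1, a_i = x_i for 2 ≤ i ≤ s, and a_i = 1 for s + 1 ≤ i ≤ p; define b_1 = x_1 − a_1, b_i = x_{i+s−1} for 2 ≤ i ≤ r − s + 1, and b_i = 1 for r − s + 2 ≤ i ≤ q. Then 1 ≤ a_1 ≤ x_1 − 1, a_1 + a_2 + ⋯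 + a_p = 2p − 2, and b_1 + b_2 + ⋯ + b_q = 2q − 2, i.e., (a_1, …, a_p) and (b_1, …, b_q) are tree-like sequences of positive integers. -/
/-- The explicit construction in the proof of Lemma 2.  Let
`x 1 ≥ x 2 ≥ ⋯ ≥ x n` be a nonincreasing tree-like sequence of positive
integers, `r` the number of indices `i` with `x i > 1`,
`z s = x 2 + ⋯ + x s`, and let `p ≥ q > 1` with `p + q = n + 1`.  Suppose
`1 ≤ s ≤ r` satisfies `z s - s + 3 ≤ p ≤ z s - s + x 1 + 1`.  Define
`a 1 = p - (z s - s + 3) + 1`, `a i = x i` for `2 ≤ i ≤ s`, `a i = 1` for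
`s + 1 ≤ i ≤ p`; and `b 1 = x 1 - a 1`, `b i = x (i + s - 1)` for
`2 ≤ i ≤ r - s + 1`, `b i = 1` for `r - s + 2 ≤ i ≤ q`.  Then
`1 ≤ a 1 ≤ x 1 - 1` and `a`, `b` are tree-like sequences of positive integers
of lengths `p` and `q`.  (Values are taken in `ℤ`; sequences are
`1`-indexed.) -/
theorem lemma2_explicit_construction (n p q r s : ℕ) (x : ℕ → ℤ)
    (hpos : ∀ i ∈ Finset.Icc 1 n, 1 ≤ x i)
    (hmono : ∀ i j : ℕ, 1 ≤ i → i ≤ j → j ≤ n → x j ≤ x i)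
    (hsum : ∑ i ∈ Finset.Icc 1 n, x i = 2 * (n : ℤ) - 2)
    (hr : r = ((Finset.Icc 1 n).filter (fun i => 1 < x i)).card)
    (hq : 1 < q) (hpq : q ≤ p) (hn : p + q = n + 1)
    (hs1 : 1 ≤ s) (hsr : s ≤ r)
    (hsp : (∑ i ∈ Finset.Icc 2 s, x i) - s + 3 ≤ (p : ℤ))
    (hps : (p : ℤ) ≤ (∑ i ∈ Finset.Icc 2 s, x i) - s + x 1 + 1)
    (a b : ℕ → ℤ)
    (ha : ∀ i : ℕ, a i =
      if i = 1 then (p : ℤ) - ((∑ j ∈ Finset.Icc 2 s, x j) - s + 3) + 1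
      else if i ≤ s then x i else 1)
    (hb : ∀ i : ℕ, b i =
      if i = 1 then x 1 - a 1
      else if i ≤ r - s + 1 then x (i + s - 1) else 1) :
    1 ≤ a 1 ∧ a 1 ≤ x 1 - 1 ∧
    (∑ i ∈ Finset.Icc 1 p, a i = 2 * (p : ℤ) - 2) ∧
    (∀ i ∈ Finset.Icc 1 p, 1 ≤ a i) ∧
    (∑ i ∈ Finset.Icc 1 q, b i = 2 * (q : ℤ) - 2) ∧
    (∀ i ∈ Finset.Icc 1 q, 1 ≤ b i) := by
  -- r ≤ n
  have hrn : r ≤ n := by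
    rw [hr]
    calc ((Finset.Icc 1 n).filter (fun i => 1 < x i)).card
        ≤ (Finset.Icc 1 n).card := Finset.card_filter_le _ _
      _ = n := by rw [Nat.card_Icc]; omega
  -- x i ≥ 2 for 1 ≤ i ≤ r
  have hx2 : ∀ i, 1 ≤ i → i ≤ r → 2 ≤ x i := by
    intro i hi1 hir
    by_contra h
    push_neg at h
    have hsub : (Finset.Icc 1 n).filter (fun j => 1 < x j) ⊆ Finset.Icc 1 (i - 1) := by
      intro j hj
      simp only [Finset.mem_filter, Finset.mem_Icc] at hj ⊢
      refine ⟨hj.1.1, ?_⟩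
      by_contra hji
      push_neg at hji
      have := hmono i j hi1 (by omega) hj.1.2
      linarith [hj.2]
    have := Finset.card_le_card hsub
    rw [← hr, Nat.card_Icc] at this
    omega
  -- x j = 1 for r < j ≤ n
  have hx1' : ∀ j, r < j → j ≤ n → x j = 1 := by
    intro j hrj hjn
    by_contra h
    have hxj : 1 < x j := by
      have := hpos j (Finset.mem_Icc.mpr ⟨by omega, hjn⟩)
      rcases lt_or_eq_of_le this with h' | h'
      · exact h'
      · exact absurd h'.symm h
    have hsub : Finset.Icc 1 j ⊆ (Finset.Icc 1 n).filter (fun k => 1 < x k) := by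
      intro k hk
      simp only [Finset.mem_Icc] at hk
      simp only [Finset.mem_filter, Finset.mem_Icc]
      exact ⟨⟨hk.1, by omega⟩, lt_of_lt_of_le hxj (hmono k j hk.1 hk.2 hjn)⟩
    have := Finset.card_le_card hsub
    rw [← hr, Nat.card_Icc] at this
    omega
  -- generic splitting of Icc sums
  have key : ∀ (f : ℕ → ℤ) (m k l : ℕ), m ≤ k → k ≤ l →
      ∑ i ∈ Finset.Icc (m + 1) k, f i + ∑ i ∈ Finset.Icc (k + 1) l, f i
        = ∑ i ∈ Finset.Icc (m + 1) l, f i := by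
    intro f m k l h1 h2
    rw [Finset.Icc_add_one_left_eq_Ioc, Finset.Icc_add_one_left_eq_Ioc, Finset.Icc_add_one_left_eq_Ioc]
    exact Finset.sum_Ioc_consecutive _ h1 h2
  set Z : ℤ := ∑ i ∈ Finset.Icc 2 s, x i with hZdef
  set T : ℤ := ∑ i ∈ Finset.Icc (s + 1) r, x i with hTdef
  -- lower bounds on Z and T
  have hZge : 2 * ((s : ℤ) - 1) ≤ Z := by
    have h1 : ∑ i ∈ Finset.Icc 2 s, (2 : ℤ) ≤ Z :=
      Finset.sum_le_sum (fun i hi => by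
        rw [Finset.mem_Icc] at hi; exact hx2 i (by omega) (by omega))
    have h2 : ∑ i ∈ Finset.Icc 2 s, (2 : ℤ) = 2 * ((s : ℤ) - 1) := by
      rw [Finset.sum_const, Nat.card_Icc, nsmul_eq_mul]
      have : ((s + 1 - 2 : ℕ) : ℤ) = (s : ℤ) - 1 := by omega
      rw [this]; ring
    linarith
  have hTge : 2 * ((r : ℤ) - s) ≤ T := by
    have h1 : ∑ i ∈ Finset.Icc (s + 1) r, (2 : ℤ) ≤ T :=
      Finset.sum_le_sum (fun i hi => by
        rw [Finset.mem_Icc] at hi; exact hx2 i (by omega) (by omega))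
    have h2 : ∑ i ∈ Finset.Icc (s + 1) r, (2 : ℤ) = 2 * ((r : ℤ) - s) := by
      rw [Finset.sum_const, Nat.card_Icc, nsmul_eq_mul]
      have : ((r + 1 - (s + 1) : ℕ) : ℤ) = (r : ℤ) - s := by omega
      rw [this]; ring
    linarith
  -- sum over Icc 1 r equals n + r - 2
  have hsum_tail : ∑ i ∈ Finset.Icc (r + 1) n, x i = ((n : ℤ) - r) := by
    have h1 : ∑ i ∈ Finset.Icc (r + 1) n, x i = ∑ i ∈ Finset.Icc (r + 1) n, (1 : ℤ) :=
      Finset.sum_congr rfl (fun i hi => by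
        rw [Finset.mem_Icc] at hi; exact hx1' i (by omega) hi.2)
    rw [h1, Finset.sum_const, Nat.card_Icc, nsmul_eq_mul]
    have : ((n + 1 - (r + 1) : ℕ) : ℤ) = (n : ℤ) - r := by omega
    rw [this]; ring
  have hsum_r : ∑ i ∈ Finset.Icc 1 r, x i = (n : ℤ) + r - 2 := by
    have := key x 0 r n (by omega) hrn
    simp only [Nat.zero_add] at this
    rw [hsum_tail] at this
    linarith [hsum, this]
  have hx1Z : x 1 + Z = ∑ i ∈ Finset.Icc 1 s, x i := by
    have := key x 0 1 s (by omega) hs1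
    simp only [Nat.zero_add, Finset.Icc_self, Finset.sum_singleton] at this
    linarith
  have hE : x 1 + Z + T = (n : ℤ) + r - 2 := by
    have := key x 0 s r (by omega) hsr
    simp only [Nat.zero_add] at this
    rw [← hx1Z] at this
    linarith [hsum_r]
  -- a 1 value
  have ha1 : a 1 = (p : ℤ) - (Z - s + 3) + 1 := by rw [ha 1]; simp
  have hga1 : 1 ≤ a 1 := by rw [ha1]; linarith
  have hga2 : a 1 ≤ x 1 - 1 := by rw [ha1]; linarith
  -- s < p
  have hsp' : s < p := by
    have : (s : ℤ) + 1 ≤ (p : ℤ) := by linarith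
    omega
  -- a is positive
  have haPos : ∀ i ∈ Finset.Icc 1 p, 1 ≤ a i := by
    intro i hi
    rw [Finset.mem_Icc] at hi
    rcases eq_or_ne i 1 with h1 | h1
    · rw [h1]; exact hga1
    · rw [ha i, if_neg h1]
      by_cases h2 : i ≤ s
      · rw [if_pos h2]
        exact hpos i (Finset.mem_Icc.mpr ⟨hi.1, by omega⟩)
      · rw [if_neg h2]
  -- sum of a
  have haZ : ∑ i ∈ Finset.Icc 2 s, a i = Z := by
    apply Finset.sum_congr rfl
    intro i hi
    rw [Finset.mem_Icc] at hi
    rw [ha i, if_neg (by omega), if_pos hi.2]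
  have haOnes : ∑ i ∈ Finset.Icc (s + 1) p, a i = ((p : ℤ) - s) := by
    have h1 : ∑ i ∈ Finset.Icc (s + 1) p, a i = ∑ i ∈ Finset.Icc (s + 1) p, (1 : ℤ) :=
      Finset.sum_congr rfl (fun i hi => by
        rw [Finset.mem_Icc] at hi
        rw [ha i, if_neg (by omega), if_neg (by omega)])
    rw [h1, Finset.sum_const, Nat.card_Icc, nsmul_eq_mul]
    have : ((p + 1 - (s + 1) : ℕ) : ℤ) = (p : ℤ) - s := by omega
    rw [this]; ring
  have hsumA : ∑ i ∈ Finset.Icc 1 p, a i = 2 * (p : ℤ) - 2 := by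
    have k1 := key a 0 1 s (by omega) hs1
    have k2 := key a 0 s p (by omega) (le_of_lt hsp')
    simp only [Nat.zero_add, Finset.Icc_self, Finset.sum_singleton] at k1 k2
    rw [← k2, ← k1, haZ, haOnes, ha1]
    ring
  -- r - s + 2 ≤ q
  have hqr : r - s + 2 ≤ q := by
    have hnc : (p : ℤ) + q = (n : ℤ) + 1 := by exact_mod_cast congrArg (Nat.cast (R := ℤ)) hn
    have : (r : ℤ) - s + 2 ≤ (q : ℤ) := by linarith
    omega
  -- b values
  have hb1 : b 1 = x 1 - a 1 := by rw [hb 1]; simp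
  -- b is positive
  have hbPos : ∀ i ∈ Finset.Icc 1 q, 1 ≤ b i := by
    intro i hi
    rw [Finset.mem_Icc] at hi
    rcases eq_or_ne i 1 with h1 | h1
    · rw [h1, hb1]; linarith
    · rw [hb i, if_neg h1]
      by_cases h2 : i ≤ r - s + 1
      · rw [if_pos h2]
        exact hpos _ (Finset.mem_Icc.mpr ⟨by omega, by omega⟩)
      · rw [if_neg h2]
  -- middle sum of b
  have hbT : ∑ i ∈ Finset.Icc 2 (r - s + 1), b i = T := by
    have step1 : ∑ i ∈ Finset.Icc 2 (r - s + 1), b i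
        = ∑ i ∈ Finset.Icc 2 (r - s + 1), x (i + (s - 1)) := by
      apply Finset.sum_congr rfl
      intro i hi
      rw [Finset.mem_Icc] at hi
      rw [hb i, if_neg (by omega), if_pos hi.2]
      congr 1
      omega
    have step2 : ∑ i ∈ Finset.Icc 2 (r - s + 1), x (i + (s - 1))
        = ∑ j ∈ Finset.Icc (2 + (s - 1)) (r - s + 1 + (s - 1)), x j := by
      rw [← Finset.map_add_right_Icc, Finset.sum_map]
      rfl
    have step3 : Finset.Icc (2 + (s - 1)) (r - s + 1 + (s - 1)) = Finset.Icc (s + 1) r := by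
      congr 1 <;> omega
    rw [step1, step2, step3]
  have hbOnes : ∑ i ∈ Finset.Icc (r - s + 2) q, b i = ((q : ℤ) - r + s - 1) := by
    have h1 : ∑ i ∈ Finset.Icc (r - s + 2) q, b i = ∑ i ∈ Finset.Icc (r - s + 2) q, (1 : ℤ) :=
      Finset.sum_congr rfl (fun i hi => by
        rw [Finset.mem_Icc] at hi
        rw [hb i, if_neg (by omega), if_neg (by omega)])
    rw [h1, Finset.sum_const, Nat.card_Icc, nsmul_eq_mul]
    have : ((q + 1 - (r - s + 2) : ℕ) : ℤ) = (q : ℤ) - r + s - 1 := by omega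
    rw [this]; ring
  have hsumB : ∑ i ∈ Finset.Icc 1 q, b i = 2 * (q : ℤ) - 2 := by
    have k1 := key b 0 1 (r - s + 1) (by omega) (by omega)
    have k2 := key b 0 (r - s + 1) q (by omega) (by omega)
    simp only [Nat.zero_add, Finset.Icc_self, Finset.sum_singleton] at k1 k2
    have hrs1 : r - s + 1 + 1 = r - s + 2 := by omega
    rw [hrs1] at k2
    have hnc : (p : ℤ) + q = (n : ℤ) + 1 := by exact_mod_cast congrArg (Nat.cast (R := ℤ)) hn
    rw [← k2, ← k1, hbT, hbOnes, hb1, ha1]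
    linarith
  exact ⟨hga1, hga2, hsumA, haPos, hsumB, hbPos⟩
end
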